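/- For any n 2-forms ω₁,…,ω_n on a Euclidean vector space ℝ^m, the comass of their wedge product satisfies comass(ω₁ ∧ ⋯ ∧ ω_n) ≤ n! · comass(ω₁) ⋯ comass(ω_n). -/

import Mathlib

open scoped BigOperators RealInnerProductSpace

/-- Comass of a k-form on a real inner product space: the supremum of |ω(v₁,…,v_k)|
over tuples of vectors of norm at most 1. -/
noncomputable def comass {E : Type*} [NormedAddCommGroup E] [InnerProductSpace ℝ E] {k : ℕ}
    (ω : E [⋀^Fin k]→ₗ[ℝ] ℝ) : ℝ :=
  sSup {r | ∃ v : Fin k → E, (∀ i, ‖v i‖ ≤ 1) ∧ r = |ω v|}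

/-- Wedge product of real-valued alternating forms (shuffle convention, so that the
wedge of dual basis covectors evaluates as a determinant). -/
noncomputable def wedge {E : Type*} [AddCommGroup E] [Module ℝ E] {p q : ℕ}
    (a : E [⋀^Fin p]→ₗ[ℝ] ℝ) (b : E [⋀^Fin q]→ₗ[ℝ] ℝ) :
    E [⋀^Fin (p + q)]→ₗ[ℝ] ℝ :=
  (TensorProduct.lid ℝ ℝ).toLinearMap.compAlternatingMap
    ((a.domCoprod b).domDomCongr finSumFinEquiv)

/-- The standard inner product of two k-forms on Euclidean n-space, for which the
increasing wedges of standard dual basis vectors are orthonormal. -/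
noncomputable def formInner {n k : ℕ}
    (a b : (EuclideanSpace ℝ (Fin n)) [⋀^Fin k]→ₗ[ℝ] ℝ) : ℝ :=
  (1 / (k.factorial : ℝ)) *
    ∑ f : Fin k → Fin n,
      a (fun i => EuclideanSpace.single (f i) 1) * b (fun i => EuclideanSpace.single (f i) 1)

/-- The standard volume form on Euclidean n-space. -/
noncomputable def vol (n : ℕ) : (EuclideanSpace ℝ (Fin n)) [⋀^Fin n]→ₗ[ℝ] ℝ :=
  (EuclideanSpace.basisFun (Fin n) ℝ).toBasis.det

/-- The n-fold wedge product of 2-forms. -/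
noncomputable def wedgeMany {E : Type*} [AddCommGroup E] [Module ℝ E] :
    ∀ n : ℕ, (Fin n → (E [⋀^Fin 2]→ₗ[ℝ] ℝ)) → (E [⋀^Fin (2 * n)]→ₗ[ℝ] ℝ)
  | 0, _ => AlternatingMap.constOfIsEmpty ℝ E (Fin 0) 1
  | n + 1, ω => wedge (wedgeMany n fun i => ω i.castSucc) (ω (Fin.last n))



section Comass

variable {m k : ℕ}

local notation "E" => EuclideanSpace ℝ (Fin m)

lemma euclid_coord_abs_le (x : E) (j : Fin m) : |x j| ≤ ‖x‖ := by
  have h := abs_real_inner_le_norm (EuclideanSpace.single j (1:ℝ)) x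
  rw [EuclideanSpace.inner_single_left] at h
  simpa [EuclideanSpace.norm_single] using h

lemma euclid_eq_sum_single (x : E) :
    x = ∑ j : Fin m, x j • EuclideanSpace.single j (1:ℝ) := by
  ext k
  rw [show ((∑ j : Fin m, x j • EuclideanSpace.single j (1:ℝ)) k)
      = ∑ j : Fin m, (x j • EuclideanSpace.single j (1:ℝ)) k from by
    rw [WithLp.ofLp_sum]; exact Finset.sum_apply k Finset.univ _]
  simp [EuclideanSpace.single_apply, Finset.sum_ite_eq']

lemma abs_apply_le_sum (ω : E [⋀^Fin k]→ₗ[ℝ] ℝ) (v : Fin k → E) (hv : ∀ i, ‖v i‖ ≤ 1) :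
    |ω v| ≤ ∑ f : Fin k → Fin m, |ω (fun i => EuclideanSpace.single (f i) (1:ℝ))| := by
  classical
  have hv' : v = fun i => ∑ j : Fin m, v i j • EuclideanSpace.single j (1:ℝ) := by
    funext i; exact euclid_eq_sum_single (v i)
  have expand : ω v = ∑ f ∈ Fintype.piFinset (fun _ : Fin k => (Finset.univ : Finset (Fin m))),
      (∏ i, v i (f i)) • ω (fun i => EuclideanSpace.single (f i) (1:ℝ)) := by
    conv_lhs => rw [hv']
    rw [show ω (fun i => ∑ j : Fin m, v i j • EuclideanSpace.single j (1:ℝ))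
        = ω.toMultilinearMap (fun i => ∑ j ∈ (Finset.univ : Finset (Fin m)),
            (fun i j => v i j • EuclideanSpace.single j (1:ℝ)) i j) from rfl]
    rw [MultilinearMap.map_sum_finset]
    refine Finset.sum_congr rfl fun f _ => ?_
    exact ω.toMultilinearMap.map_smul_univ (fun i => v i (f i))
      (fun i => EuclideanSpace.single (f i) (1:ℝ))
  rw [expand, Fintype.piFinset_univ]
  refine le_trans (Finset.abs_sum_le_sum_abs _ _) ?_
  refine Finset.sum_le_sum fun f _ => ?_
  rw [smul_eq_mul, abs_mul]
  have h1 : |∏ i, v i (f i)| ≤ 1 := by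
    rw [Finset.abs_prod]
    refine Finset.prod_le_one (fun i _ => abs_nonneg _) (fun i _ => ?_)
    exact le_trans (euclid_coord_abs_le (v i) (f i)) (hv i)
  nlinarith [abs_nonneg (ω fun i => EuclideanSpace.single (f i) (1:ℝ)),
    abs_nonneg (∏ i, v i (f i))]

lemma comass_set_nonempty (ω : E [⋀^Fin k]→ₗ[ℝ] ℝ) :
    Set.Nonempty {r | ∃ v : Fin k → E, (∀ i, ‖v i‖ ≤ 1) ∧ r = |ω v|} :=
  ⟨|ω 0|, 0, fun _ => by simp, rfl⟩

lemma comass_bddAbove (ω : E [⋀^Fin k]→ₗ[ℝ] ℝ) :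
    BddAbove {r | ∃ v : Fin k → E, (∀ i, ‖v i‖ ≤ 1) ∧ r = |ω v|} := by
  refine ⟨∑ f : Fin k → Fin m, |ω (fun i => EuclideanSpace.single (f i) (1:ℝ))|, ?_⟩
  rintro r ⟨v, hv, rfl⟩
  exact abs_apply_le_sum ω v hv

lemma le_comass (ω : E [⋀^Fin k]→ₗ[ℝ] ℝ) (v : Fin k → E) (hv : ∀ i, ‖v i‖ ≤ 1) :
    |ω v| ≤ comass ω :=
  le_csSup (comass_bddAbove ω) ⟨v, hv, rfl⟩

lemma comass_nonneg (ω : E [⋀^Fin k]→ₗ[ℝ] ℝ) : 0 ≤ comass ω :=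
  le_trans (abs_nonneg _) (le_comass ω 0 (fun _ => by simp))

lemma comass_le (ω : E [⋀^Fin k]→ₗ[ℝ] ℝ) {C : ℝ} (hC : 0 ≤ C)
    (h : ∀ v : Fin k → E, (∀ i, ‖v i‖ ≤ 1) → |ω v| ≤ C) : comass ω ≤ C := by
  refine Real.sSup_le ?_ hC
  rintro r ⟨v, hv, rfl⟩
  exact h v hv

end Comass
open scoped BigOperators RealInnerProductSpace

lemma fin_le_id {k : ℕ} (f : Fin k → Fin k) (hle : ∀ i, f i ≤ i)
    (hinj : Function.Injective f) : f = id := by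
  suffices h : ∀ n (i : Fin k), (i : ℕ) = n → f i = i by
    funext i; exact h i i rfl
  intro n
  induction n using Nat.strong_induction_on with
  | _ n IH =>
    intro i hi
    rcases lt_or_eq_of_le (hle i) with h | h
    · have h2 : f (f i) = f i := IH (f i) (by omega) (f i) rfl
      have := hinj h2
      exact absurd this (ne_of_lt h)
    · exact h

section Tri
variable {F : Type*} [NormedAddCommGroup F] [InnerProductSpace ℝ F]

lemma span_orthonormal_repr {k : ℕ} (e : Fin k → F) (he : Orthonormal ℝ e) (i : Fin k)
    {x : F} (hx : x ∈ Submodule.span ℝ (e '' Set.Iic i)) :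
    x = ∑ j ∈ Finset.Iic i, ⟪e j, x⟫ • e j := by
  classical
  let T : F →ₗ[ℝ] F := ∑ j ∈ Finset.Iic i,
    LinearMap.smulRight (innerSL ℝ (e j) : F →L[ℝ] ℝ).toLinearMap (e j)
  have hT : ∀ y, T y = ∑ j ∈ Finset.Iic i, ⟪e j, y⟫ • e j := by
    intro y
    simp [T, LinearMap.sum_apply]
  have hfix : ∀ y ∈ Submodule.span ℝ (e '' Set.Iic i), T y = LinearMap.id (R := ℝ) y := by
    intro y hy
    refine LinearMap.eqOn_span (f := T) (g := LinearMap.id) ?_ hy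
    rintro z ⟨j, hj, rfl⟩
    rw [hT]
    have : ∀ j' ∈ Finset.Iic i, ⟪e j', e j⟫ • e j' = if j' = j then e j else 0 := by
      intro j' _
      rcases eq_or_ne j' j with rfl | hne
      · simp [(orthonormal_iff_ite.mp he) j' j', he.1 j']
      · simp [(orthonormal_iff_ite.mp he) j' j, hne]
    rw [Finset.sum_congr rfl this, Finset.sum_ite_eq' (Finset.Iic i) j (fun _ => e j)]
    simp only [LinearMap.id_apply]
    rw [if_pos]
    exact Finset.mem_Iic.mpr (Set.mem_Iic.mp hj)
  have hx' := hfix x hx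
  rw [← hT x, hx']
  rfl

lemma triangular_eval {k : ℕ} (ω : F [⋀^Fin k]→ₗ[ℝ] ℝ) (e v : Fin k → F)
    (he : Orthonormal ℝ e)
    (hv : ∀ i, v i ∈ Submodule.span ℝ (e '' Set.Iic i)) :
    ω v = (∏ i, ⟪e i, v i⟫) * ω e := by
  classical
  have hv' : v = fun i => ∑ j ∈ Finset.Iic i, ⟪e j, v i⟫ • e j := by
    funext i; exact span_orthonormal_repr e he i (hv i)
  have expand : ω v = ∑ f ∈ Fintype.piFinset (fun i : Fin k => Finset.Iic i),
      (∏ i, ⟪e (f i), v i⟫) • ω (fun i => e (f i)) := by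
    conv_lhs => rw [hv']
    rw [show ω (fun i => ∑ j ∈ Finset.Iic i, ⟪e j, v i⟫ • e j)
        = ω.toMultilinearMap (fun i => ∑ j ∈ Finset.Iic i,
            (fun (i : Fin k) (j : Fin k) => ⟪e j, v i⟫ • e j) i j) from rfl]
    rw [MultilinearMap.map_sum_finset]
    refine Finset.sum_congr rfl fun f _ => ?_
    exact ω.toMultilinearMap.map_smul_univ (fun i => ⟪e (f i), v i⟫) (fun i => e (f i))
  rw [expand]
  have hid : (id : Fin k → Fin k) ∈ Fintype.piFinset (fun i : Fin k => Finset.Iic i) := by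
    simp [Fintype.mem_piFinset]
  rw [Finset.sum_eq_single_of_mem id hid]
  · simp [smul_eq_mul]
  · intro f hf hne
    have hle : ∀ i, f i ≤ i := by
      intro i
      have := Fintype.mem_piFinset.mp hf i
      simpa using this
    have hninj : ¬ Function.Injective f := fun hinj => hne (fin_le_id f hle hinj)
    obtain ⟨i, j, hij, hne'⟩ : ∃ i j, f i = f j ∧ i ≠ j := by
      simp only [Function.Injective, not_forall] at hninj
      obtain ⟨i, j, h1, h2⟩ := hninj
      exact ⟨i, j, h1, h2⟩
    have : ω (fun i => e (f i)) = 0 :=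
      ω.map_eq_zero_of_eq _ (by rw [hij]) hne'
    rw [this, smul_zero]

end Tri
open scoped BigOperators RealInnerProductSpace
open Module Submodule

lemma skew_canonical (d : ℕ) :
    ∀ (F : Type) [NormedAddCommGroup F] [InnerProductSpace ℝ F] [FiniteDimensional ℝ F],
    finrank ℝ F = d → ∀ (L : F →ₗ[ℝ] F), (∀ x y, ⟪L x, y⟫ = -⟪x, L y⟫) →
    ∃ v : Fin d → F, Orthonormal ℝ v ∧
      ∀ i j : Fin d, (i : ℕ) / 2 ≠ (j : ℕ) / 2 → ⟪L (v i), v j⟫ = 0 := by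
  induction d using Nat.strong_induction_on with
  | _ d IH =>
    intro F iN iI iFD hd L hL
    by_cases hL0 : L = 0
    · -- L = 0 : any orthonormal basis works
      refine ⟨fun i => stdOrthonormalBasis ℝ F (Fin.cast hd.symm i), ?_, ?_⟩
      · exact (stdOrthonormalBasis ℝ F).orthonormal.comp _ (fun a b h => by
          simpa [Fin.ext_iff] using h)
      · intro i j _
        simp [hL0]
    · -- L ≠ 0
      have hS : (L ∘ₗ L).IsSymmetric := by
        intro x y
        have h1 := hL (L x) y
        have h2 := hL x (L y)
        simp only [LinearMap.comp_apply]
        linarith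
      set b := hS.eigenvectorBasis hd with hb
      set μ := hS.eigenvalues hd with hμ
      have hball : ∀ i, (L ∘ₗ L) (b i) = (μ i) • b i := fun i =>
        hS.apply_eigenvectorBasis hd i
      have hex : ∃ i, μ i ≠ 0 := by
        by_contra hc
        push_neg at hc
        have hS0 : L ∘ₗ L = 0 := by
          apply b.toBasis.ext
          intro i
          simp [hball i, hc i]
        apply hL0
        ext x
        have h0 : ⟪L (L x), x⟫ = 0 := by
          have : L (L x) = 0 := by
            have := congrArg (fun f => f x) (congrArg DFunLike.coe hS0)
            simpa [LinearMap.comp_apply] using this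
          simp [this]
        have h1 := hL (L x) x
        have : ⟪L x, L x⟫ = 0 := by linarith
        simpa using inner_self_eq_zero.mp this
      obtain ⟨i0, hi0⟩ := hex
      set u := b i0 with hu
      have hnu : ‖u‖ = 1 := b.orthonormal.1 i0
      have hSu : L (L u) = (μ i0) • u := hball i0
      have hμval : μ i0 = -‖L u‖ ^ 2 := by
        have h1 : ⟪L (L u), u⟫ = μ i0 * ⟪u, u⟫ := by rw [hSu, real_inner_smul_left]
        have h2 : ⟪u, u⟫ = 1 := by
          rw [real_inner_self_eq_norm_sq, hnu]; norm_num
        have h3 := hL (L u) u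
        have h4 : ⟪L u, L u⟫ = ‖L u‖ ^ 2 := real_inner_self_eq_norm_sq _
        have h5 : ⟪u, L (L u)⟫ = μ i0 := by
          rw [hSu, real_inner_smul_right, h2]; ring
        have h6 : ⟪u, L (L u)⟫ = ⟪L (L u), u⟫ := real_inner_comm _ _
        linarith
      have hLune : L u ≠ 0 := by
        intro h
        rw [h] at hμval
        simp at hμval
        exact hi0 (by rw [hμval])
      set c := ‖L u‖ with hc
      have hcpos : 0 < c := norm_pos_iff.mpr hLune
      set w := c⁻¹ • L u with hw
      have hnw : ‖w‖ = 1 := by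
        rw [hw, norm_smul, norm_inv, norm_norm, ← hc, inv_mul_cancel₀ (ne_of_gt hcpos)]
      have hLu : L u = c • w := by
        rw [hw, smul_smul, mul_inv_cancel₀ (ne_of_gt hcpos), one_smul]
      have huLu : ⟪u, L u⟫ = 0 := by
        have h1 := hL u u
        have h2 : ⟪L u, u⟫ = ⟪u, L u⟫ := real_inner_comm _ _
        linarith
      have huw : ⟪u, w⟫ = 0 := by
        rw [hw, real_inner_smul_right, huLu, mul_zero]
      have hwu : ⟪w, u⟫ = 0 := (real_inner_comm u w).trans huw
      have hLw : L w = (-c) • u := by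
        rw [hw, map_smul, hSu, hμval, smul_smul]
        congr 1
        field_simp
      -- the orthonormal pair
      set f2 : Fin 2 → F := ![u, w] with hf2
      have hon2 : Orthonormal ℝ f2 := by
        rw [orthonormal_iff_ite]
        intro i j
        fin_cases i <;> fin_cases j <;>
          simp [hf2, huw, hwu, hnu, hnw, real_inner_self_eq_norm_sq]
      set P := Submodule.span ℝ (Set.range f2) with hP
      have huP : u ∈ P := subset_span ⟨0, rfl⟩
      have hwP : w ∈ P := subset_span ⟨1, rfl⟩
      have hrankP : finrank ℝ P = 2 := by
        rw [hP, finrank_span_eq_card hon2.linearIndependent]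
        simp
      have hd2 : 2 ≤ d := by
        rw [← hrankP, ← hd]
        exact Submodule.finrank_le P
      obtain ⟨d', rfl⟩ : ∃ d', d = d' + 2 := ⟨d - 2, by omega⟩
      -- orthogonal complement
      have hmemO : ∀ y : F, ⟪u, y⟫ = 0 → ⟪w, y⟫ = 0 → y ∈ Pᗮ := by
        intro y h1 h2
        rw [Submodule.mem_orthogonal]
        intro p hp
        induction hp using Submodule.span_induction with
        | mem z hz =>
          obtain ⟨i, rfl⟩ := hz
          fin_cases i
          · simpa [hf2] using h1
          · simpa [hf2] using h2
        | zero => simp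
        | add a b _ _ ha hb => rw [inner_add_left, ha, hb, add_zero]
        | smul r a _ ha => rw [real_inner_smul_left, ha, mul_zero]
      have hinv : ∀ x ∈ Pᗮ, L x ∈ Pᗮ := by
        intro x hx
        have hxu : ⟪x, u⟫ = 0 := inner_left_of_mem_orthogonal huP hx
        have hxw : ⟪x, w⟫ = 0 := inner_left_of_mem_orthogonal hwP hx
        apply hmemO
        · have := hL x u
          have h2 : ⟪u, L x⟫ = ⟪L x, u⟫ := real_inner_comm _ _
          have h3 : ⟪x, L u⟫ = c * ⟪x, w⟫ := by rw [hLu, real_inner_smul_right]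
          rw [h2]
          rw [hxw] at h3
          linarith [hL x u]
        · have h3 : ⟪x, L w⟫ = -c * ⟪x, u⟫ := by
            rw [hLw, real_inner_smul_right]
          have h2 : ⟪w, L x⟫ = ⟪L x, w⟫ := real_inner_comm _ _
          rw [hxu] at h3
          rw [h2]
          linarith [hL x w]
      have hrankO : finrank ℝ ↥Pᗮ = d' := by
        have := Submodule.finrank_add_finrank_orthogonal P
        rw [hrankP, hd] at this
        omega
      set L' : ↥Pᗮ →ₗ[ℝ] ↥Pᗮ := L.restrict hinv with hL'def
      have hL' : ∀ x y : ↥Pᗮ, ⟪L' x, y⟫ = -⟪x, L' y⟫ := by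
        intro x y
        have h1 : ((L' x : F)) = L (x : F) := rfl
        have h2 : ((L' y : F)) = L (y : F) := rfl
        rw [Submodule.coe_inner, Submodule.coe_inner, h1, h2]
        exact hL _ _
      obtain ⟨v', hv'on, hv'prop⟩ := IH d' (by omega) ↥Pᗮ hrankO L' hL'
      -- assemble
      set v : Fin (d' + 2) → F :=
        fun i => Fin.cases u (fun i1 => Fin.cases w (fun j => (v' j : F)) i1) i with hv
      have hv0 : v 0 = u := rfl
      have h1succ : (1 : Fin (d' + 2)) = Fin.succ 0 := (Fin.succ_zero_eq_one' ..).symm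
      have hv1 : v 1 = w := by
        rw [h1succ]
        simp only [hv, Fin.cases_succ, Fin.cases_zero]
      have hvs : ∀ j : Fin d', v j.succ.succ = (v' j : F) := by
        intro j
        simp only [hv, Fin.cases_succ]
      have hvP : ∀ j : Fin d', ((v' j : F)) ∈ Pᗮ := fun j => (v' j).2
      refine ⟨v, ?_, ?_⟩
      · rw [orthonormal_iff_ite]
        intro i j
        induction i using Fin.cases with
        | zero =>
          induction j using Fin.cases with
          | zero => simp [hv0, real_inner_self_eq_norm_sq, hnu]
          | succ j1 =>
            induction j1 using Fin.cases with
            | zero =>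
              rw [← h1succ, hv0, hv1]
              simp [huw, Fin.ext_iff]
            | succ j2 =>
              rw [hv0, hvs j2, if_neg (by simp [Fin.ext_iff])]
              exact inner_right_of_mem_orthogonal huP (hvP j2)
        | succ i1 =>
          induction i1 using Fin.cases with
          | zero =>
            rw [← h1succ]
            induction j using Fin.cases with
            | zero =>
              rw [hv0, hv1]
              simp [hwu, Fin.ext_iff]
            | succ j1 =>
              induction j1 using Fin.cases with
              | zero =>
                rw [← h1succ, hv1]
                simp [real_inner_self_eq_norm_sq, hnw]
              | succ j2 =>
                rw [hv1, hvs j2, if_neg (by simp [Fin.ext_iff])]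
                exact inner_right_of_mem_orthogonal hwP (hvP j2)
          | succ i2 =>
            induction j using Fin.cases with
            | zero =>
              rw [hv0, hvs i2, if_neg (by simp [Fin.ext_iff])]
              exact inner_left_of_mem_orthogonal huP (hvP i2)
            | succ j1 =>
              induction j1 using Fin.cases with
              | zero =>
                rw [← h1succ, hv1, hvs i2, if_neg (by simp [Fin.ext_iff])]
                exact inner_left_of_mem_orthogonal hwP (hvP i2)
              | succ j2 =>
                rw [hvs i2, hvs j2]
                have h := orthonormal_iff_ite.mp hv'on i2 j2
                rw [Submodule.coe_inner] at h
                rw [h]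
                by_cases he : i2 = j2
                · rw [if_pos he, if_pos (by rw [he])]
                · rw [if_neg he, if_neg (fun hc => he (Fin.succ_inj.mp (Fin.succ_inj.mp hc)))]
      · intro i j hij
        induction i using Fin.cases with
        | zero =>
          induction j using Fin.cases with
          | zero => exact absurd rfl hij
          | succ j1 =>
            induction j1 using Fin.cases with
            | zero =>
              exfalso
              apply hij
              simp [Fin.val_succ]
            | succ j2 =>
              rw [hv0, hvs j2, hLu, real_inner_smul_left,
                inner_right_of_mem_orthogonal hwP (hvP j2), mul_zero]
        | succ i1 =>
          induction i1 using Fin.cases with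
          | zero =>
            induction j using Fin.cases with
            | zero =>
              exfalso
              apply hij
              simp [Fin.val_succ]
            | succ j1 =>
              induction j1 using Fin.cases with
              | zero => exact absurd rfl hij
              | succ j2 =>
                rw [← h1succ, hv1, hvs j2, hLw, real_inner_smul_left,
                  inner_right_of_mem_orthogonal huP (hvP j2), mul_zero]
          | succ i2 =>
            induction j using Fin.cases with
            | zero =>
              rw [hv0, hvs i2]
              exact inner_left_of_mem_orthogonal huP (hinv _ (hvP i2))
            | succ j1 =>
              induction j1 using Fin.cases with
              | zero =>
                rw [← h1succ, hv1, hvs i2]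
                exact inner_left_of_mem_orthogonal hwP (hinv _ (hvP i2))
              | succ j2 =>
                rw [hvs i2, hvs j2]
                have harg : (i2 : ℕ) / 2 ≠ (j2 : ℕ) / 2 := by
                  intro h
                  apply hij
                  simp only [Fin.val_succ]
                  omega
                have := hv'prop i2 j2 harg
                rw [Submodule.coe_inner] at this
                rw [← this]
                rfl
open scoped BigOperators
open Equiv
open scoped TensorProduct

lemma perm_sum_le {M : ℕ} (F : Fin (M + 2) → Fin (M + 2) → ℝ) (cA : ℝ) (hcA : 0 ≤ cA)
    (hle : ∀ p q, F p q ≤ cA) (hF : ∀ p, ∃ t, ∀ q, q ≠ t → F p q = 0) :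
    ∑ τ : Equiv.Perm (Fin (M + 2)), F (τ 0) (τ 1) ≤ (M + 2 : ℝ) * M.factorial * cA := by
  classical
  have h1 : ∑ τ : Equiv.Perm (Fin (M + 2)), F (τ 0) (τ 1)
      = ∑ x : Fin (M + 2) × Equiv.Perm (Fin (M + 1)),
          F (Equiv.Perm.decomposeFin.symm x 0) (Equiv.Perm.decomposeFin.symm x 1) :=
    (Equiv.sum_comp Equiv.Perm.decomposeFin.symm (fun τ => F (τ 0) (τ 1))).symm
  rw [h1, Fintype.sum_prod_type]
  have h2 : ∀ (p : Fin (M + 2)) (σ : Equiv.Perm (Fin (M + 1))),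
      F (Equiv.Perm.decomposeFin.symm (p, σ) 0) (Equiv.Perm.decomposeFin.symm (p, σ) 1)
      = F p (Equiv.swap 0 p ((σ 0).succ)) := by
    intro p σ
    rw [Equiv.Perm.decomposeFin_symm_apply_zero,
      show (1 : Fin (M + 2)) = (0 : Fin (M + 1)).succ from (Fin.succ_zero_eq_one' ..).symm,
      Equiv.Perm.decomposeFin_symm_apply_succ]
  have h3 : ∀ p : Fin (M + 2),
      ∑ σ : Equiv.Perm (Fin (M + 1)), F p (Equiv.swap 0 p ((σ 0).succ))
        ≤ (M.factorial : ℝ) * cA := by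
    intro p
    have h4 : ∑ σ : Equiv.Perm (Fin (M + 1)), F p (Equiv.swap 0 p ((σ 0).succ))
        = ∑ x : Fin (M + 1) × Equiv.Perm (Fin M),
            F p (Equiv.swap 0 p ((Equiv.Perm.decomposeFin.symm x 0).succ)) :=
      (Equiv.sum_comp Equiv.Perm.decomposeFin.symm
        (fun σ => F p (Equiv.swap 0 p ((σ 0).succ)))).symm
    rw [h4, Fintype.sum_prod_type]
    have h5 : ∀ (q : Fin (M + 1)) (σ' : Equiv.Perm (Fin M)),
        F p (Equiv.swap 0 p ((Equiv.Perm.decomposeFin.symm (q, σ') 0).succ))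
        = F p (Equiv.swap 0 p (q.succ)) := by
      intro q σ'
      rw [Equiv.Perm.decomposeFin_symm_apply_zero]
    calc ∑ q : Fin (M + 1), ∑ σ' : Equiv.Perm (Fin M),
          F p (Equiv.swap 0 p ((Equiv.Perm.decomposeFin.symm (q, σ') 0).succ))
        = ∑ q : Fin (M + 1), (M.factorial : ℝ) * F p (Equiv.swap 0 p (q.succ)) := by
          refine Finset.sum_congr rfl fun q _ => ?_
          rw [Finset.sum_congr rfl (fun σ' _ => h5 q σ'), Finset.sum_const, Finset.card_univ,
            Fintype.card_perm, Fintype.card_fin, nsmul_eq_mul]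
      _ = (M.factorial : ℝ) * ∑ q : Fin (M + 1), F p (Equiv.swap 0 p (q.succ)) := by
          rw [Finset.mul_sum]
      _ ≤ (M.factorial : ℝ) * cA := by
          refine mul_le_mul_of_nonneg_left ?_ (by positivity)
          obtain ⟨t, ht⟩ := hF p
          have hinj : Function.Injective (fun q : Fin (M + 1) => Equiv.swap 0 p q.succ) := by
            intro a b hab
            exact Fin.succ_injective _ ((Equiv.swap 0 p).injective hab)
          calc ∑ q : Fin (M + 1), F p (Equiv.swap 0 p q.succ)
              = ∑ q : Fin (M + 1), if Equiv.swap 0 p q.succ = t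
                  then F p (Equiv.swap 0 p q.succ) else 0 := by
                refine Finset.sum_congr rfl fun q _ => ?_
                split
                · rfl
                · exact ht _ (by assumption)
            _ ≤ ∑ q : Fin (M + 1), if Equiv.swap 0 p q.succ = t then cA else 0 := by
                refine Finset.sum_le_sum fun q _ => ?_
                split
                · exact hle _ _
                · exact le_refl 0
            _ = ((Finset.univ.filter fun q : Fin (M + 1) =>
                  Equiv.swap 0 p q.succ = t).card : ℝ) * cA := by
                rw [← Finset.sum_filter, Finset.sum_const, nsmul_eq_mul]
            _ ≤ 1 * cA := by
                refine mul_le_mul_of_nonneg_right ?_ hcA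
                have : (Finset.univ.filter fun q : Fin (M + 1) =>
                    Equiv.swap 0 p q.succ = t).card ≤ 1 := by
                  refine Finset.card_le_one.mpr fun a ha b hb => ?_
                  have ha' := (Finset.mem_filter.mp ha).2
                  have hb' := (Finset.mem_filter.mp hb).2
                  exact hinj (ha'.trans hb'.symm)
                exact_mod_cast this
            _ = cA := one_mul cA
  calc ∑ p : Fin (M + 2), ∑ σ : Equiv.Perm (Fin (M + 1)),
        F (Equiv.Perm.decomposeFin.symm (p, σ) 0) (Equiv.Perm.decomposeFin.symm (p, σ) 1)
      = ∑ p : Fin (M + 2), ∑ σ : Equiv.Perm (Fin (M + 1)),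
          F p (Equiv.swap 0 p ((σ 0).succ)) := by
        refine Finset.sum_congr rfl fun p _ => Finset.sum_congr rfl fun σ _ => h2 p σ
    _ ≤ ∑ _p : Fin (M + 2), (M.factorial : ℝ) * cA := Finset.sum_le_sum fun p _ => h3 p
    _ = (M + 2 : ℝ) * M.factorial * cA := by
        rw [Finset.sum_const, Finset.card_univ, Fintype.card_fin, nsmul_eq_mul]
        push_cast
        ring

/-! ### Rotation and determinant -/

section Rotate

variable {m N : ℕ}

local notation "E" => EuclideanSpace ℝ (Fin m)

/-- Linear combination map sending coefficients to `∑ c k • v k`. -/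
noncomputable def lincomb (v : Fin N → E) : EuclideanSpace ℝ (Fin N) →ₗ[ℝ] E where
  toFun := fun c => ∑ k, c k • v k
  map_add' := by
    intro a b
    rw [← Finset.sum_add_distrib]
    refine Finset.sum_congr rfl fun k _ => ?_
    have : (a + b) k = a k + b k := rfl
    rw [this, add_smul]
  map_smul' := by
    intro r a
    simp only [RingHom.id_apply]
    rw [Finset.smul_sum]
    refine Finset.sum_congr rfl fun k _ => ?_
    have : (r • a) k = r * a k := rfl
    rw [this, smul_smul]

lemma real_inner_euclid (x y : EuclideanSpace ℝ (Fin N)) : ⟪x, y⟫ = ∑ k, x k * y k := by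
  simp [PiLp.inner_apply, RCLike.inner_apply, starRingEnd_apply, star_trivial]
  exact Finset.sum_congr rfl fun _ _ => mul_comm _ _

lemma lincomb_inner {v : Fin N → E} (hv : Orthonormal ℝ v) (x y : EuclideanSpace ℝ (Fin N)) :
    ⟪lincomb v x, lincomb v y⟫ = ⟪x, y⟫ := by
  have hvij := orthonormal_iff_ite.mp hv
  rw [real_inner_euclid x y]
  show ⟪∑ k, x k • v k, ∑ l, y l • v l⟫ = _
  rw [sum_inner]
  refine Finset.sum_congr rfl fun k _ => ?_
  rw [real_inner_smul_left, inner_sum]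
  have : ∀ l ∈ Finset.univ, ⟪v k, y l • v l⟫ = if l = k then y l else 0 := by
    intro l _
    rw [real_inner_smul_right, hvij k l]
    by_cases h : l = k
    · subst h; simp
    · rw [if_neg (fun hc : k = l => h hc.symm), if_neg h, mul_zero]
  rw [Finset.sum_congr rfl this, Finset.sum_ite_eq' Finset.univ k (fun l => y l)]
  simp

lemma lincomb_orthonormal {v : Fin N → E} (hv : Orthonormal ℝ v)
    {y : Fin N → EuclideanSpace ℝ (Fin N)} (hy : Orthonormal ℝ y) :
    Orthonormal ℝ (fun j => lincomb v (y j)) := by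
  rw [orthonormal_iff_ite]
  intro i j
  rw [lincomb_inner hv]
  exact orthonormal_iff_ite.mp hy i j

lemma lincomb_single {v : Fin N → E} (k : Fin N) :
    lincomb v (EuclideanSpace.single k (1:ℝ)) = v k := by
  show (∑ j, EuclideanSpace.single k (1:ℝ) j • v j) = v k
  have : ∀ j ∈ Finset.univ, EuclideanSpace.single k (1:ℝ) j • v j
      = if j = k then v j else 0 := by
    intro j _
    rw [EuclideanSpace.single_apply]
    by_cases h : j = k
    · subst h; simp
    · rw [if_neg h, if_neg h, zero_smul]
  rw [Finset.sum_congr rfl this, Finset.sum_ite_eq' Finset.univ k (fun j => v j)]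
  simp

lemma abs_rotate (ω : E [⋀^Fin N]→ₗ[ℝ] ℝ) (v : Fin N → E)
    {y : Fin N → EuclideanSpace ℝ (Fin N)} (hy : Orthonormal ℝ y) :
    |ω (fun j => lincomb v (y j))| = |ω v| := by
  classical
  set b := (EuclideanSpace.basisFun (Fin N) ℝ).toBasis with hb
  set Ω := ω.compLinearMap (lincomb v) with hΩ
  have heq : Ω = Ω ⇑b • b.det := Ω.eq_smul_basis_det b
  have hΩb : Ω ⇑b = ω v := by
    rw [hΩ]
    rw [AlternatingMap.compLinearMap_apply]
    congr 1
    funext k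
    rw [hb]
    rw [show (⇑((EuclideanSpace.basisFun (Fin N) ℝ).toBasis) : Fin N → EuclideanSpace ℝ (Fin N))
        = ⇑(EuclideanSpace.basisFun (Fin N) ℝ) from (EuclideanSpace.basisFun (Fin N) ℝ).coe_toBasis]
    rw [EuclideanSpace.basisFun_apply]
    exact lincomb_single k
  -- the matrix of y
  set Y := b.toMatrix y with hY
  have hYent : ∀ i j, Y i j = y j i := by
    intro i j
    rw [hY, Basis.toMatrix_apply, hb]
    rw [(EuclideanSpace.basisFun (Fin N) ℝ).coe_toBasis_repr_apply]
    rfl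
  have hYTY : Matrix.transpose Y * Y = 1 := by
    ext i j
    rw [Matrix.mul_apply, Matrix.one_apply]
    have : ∀ k, Matrix.transpose Y i k * Y k j = y i k * y j k := by
      intro k
      rw [Matrix.transpose_apply, hYent, hYent]
    rw [Finset.sum_congr rfl (fun k _ => this k), ← real_inner_euclid]
    rw [orthonormal_iff_ite.mp hy i j]
  have hdet : Y.det * Y.det = 1 := by
    have h := congrArg Matrix.det hYTY
    rwa [Matrix.det_mul, Matrix.det_transpose, Matrix.det_one] at h
  have habs : |Y.det| = 1 := by
    rcases mul_self_eq_one_iff.mp hdet with h | h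
    · rw [h]; exact abs_one
    · rw [h]; simp
  have hval : ω (fun j => lincomb v (y j)) = ω v * Y.det := by
    have h1 : Ω y = ω (fun j => lincomb v (y j)) := by
      rw [hΩ, AlternatingMap.compLinearMap_apply]
    have h2 : Ω y = Ω ⇑b * b.det y := by
      conv_lhs => rw [heq]
      rw [AlternatingMap.smul_apply, smul_eq_mul]
    rw [← h1, h2, hΩb, Basis.det_apply]
  rw [hval, abs_mul, habs, mul_one]

end Rotate

/-! ### The key wedge bound on orthonormal-canonical tuples -/

section WedgeBound

variable {m : ℕ}

local notation "E" => EuclideanSpace ℝ (Fin m)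

open Equiv
open scoped TensorProduct

lemma wedge_canonical_bound (n' : ℕ) (B : E [⋀^Fin (2 * n')]→ₗ[ℝ] ℝ)
    (a : E [⋀^Fin 2]→ₗ[ℝ] ℝ) (w : Fin (2 * n' + 2) → E) (hw : ∀ j, ‖w j‖ ≤ 1)
    (hcan : ∀ p q : Fin (2 * n' + 2), (p : ℕ) / 2 ≠ (q : ℕ) / 2 → a ![w p, w q] = 0) :
    |wedge B a w| ≤ (n' + 1 : ℝ) * comass B * comass a := by
  classical
  set u : Fin (2 * n') ⊕ Fin 2 → E := fun s => w (finSumFinEquiv s) with hu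
  set fse := (finSumFinEquiv : Fin (2 * n') ⊕ Fin 2 ≃ Fin (2 * n' + 2)) with hfse
  -- pointwise alternatization formula
  have halt : MultilinearMap.alternatization
      (MultilinearMap.domCoprod (↑B) (↑a) :
        MultilinearMap ℝ (fun _ : Fin (2 * n') ⊕ Fin 2 => E) (ℝ ⊗[ℝ] ℝ))
      = ((2 * n').factorial * 2) • B.domCoprod a := by
    have h := MultilinearMap.domCoprod_alternization_eq B a
    rwa [Fintype.card_fin, Fintype.card_fin, Nat.factorial_two] at h
  have h1 : ∑ σ : Perm (Fin (2 * n') ⊕ Fin 2), Equiv.Perm.sign σ •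
        (MultilinearMap.domCoprod (↑B) (↑a) :
          MultilinearMap ℝ (fun _ : Fin (2 * n') ⊕ Fin 2 => E) (ℝ ⊗[ℝ] ℝ)).domDomCongr σ u
      = ((2 * n').factorial * 2) • (B.domCoprod a) u := by
    rw [← MultilinearMap.alternatization_apply, halt]
    rw [AlternatingMap.smul_apply]
  set l : ℝ ⊗[ℝ] ℝ →ₗ[ℝ] ℝ := (TensorProduct.lid ℝ ℝ).toLinearMap with hl
  have h2 : ∑ σ : Perm (Fin (2 * n') ⊕ Fin 2), ((Equiv.Perm.sign σ : ℤ) : ℝ) *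
        (B (fun i => u (σ (Sum.inl i))) * a (fun i => u (σ (Sum.inr i))))
      = ((2 * n').factorial * 2 : ℕ) • (l ((B.domCoprod a) u)) := by
    have h := congrArg l h1
    rw [map_sum, map_nsmul] at h
    rw [← h]
    refine Finset.sum_congr rfl fun σ _ => ?_
    rw [Units.smul_def, map_zsmul]
    rw [MultilinearMap.domDomCongr_apply, MultilinearMap.domCoprod_apply]
    simp only [hl, LinearEquiv.coe_toLinearMap, TensorProduct.lid_tmul, smul_eq_mul,
      AlternatingMap.coe_multilinearMap, zsmul_eq_mul]
  have hw0 : wedge B a w = l ((B.domCoprod a) u) := by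
    show (l.compAlternatingMap
      ((B.domCoprod a).domDomCongr finSumFinEquiv)) w = _
    rw [LinearMap.compAlternatingMap_apply, AlternatingMap.domDomCongr_apply]
    rfl
  -- the absolute-value bound on the sum
  set cB := comass B with hcB
  set cA := comass a with hcA
  have hcB0 : 0 ≤ cB := comass_nonneg B
  have hcA0 : 0 ≤ cA := comass_nonneg a
  set F : Fin (2 * n' + 2) → Fin (2 * n' + 2) → ℝ := fun p q => |a ![w p, w q]| with hF
  set a₀ := fse (Sum.inr 0) with ha₀
  set b₀ := fse (Sum.inr 1) with hb₀
  have hab : a₀ ≠ b₀ := by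
    rw [ha₀, hb₀]
    intro h
    have := fse.injective h
    simp at this
  -- bound each term
  have hterm : ∀ σ : Perm (Fin (2 * n') ⊕ Fin 2),
      |B (fun i => u (σ (Sum.inl i))) * a (fun i => u (σ (Sum.inr i)))|
        ≤ cB * F (fse.permCongr σ a₀) (fse.permCongr σ b₀) := by
    intro σ
    rw [abs_mul]
    have harg2 : (fun i : Fin 2 => u (σ (Sum.inr i)))
        = ![w (fse.permCongr σ a₀), w (fse.permCongr σ b₀)] := by
      funext i
      have hcong : ∀ s, fse.permCongr σ (fse s) = fse (σ s) := by
        intro s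
        rw [Equiv.permCongr_apply, Equiv.symm_apply_apply]
      fin_cases i
      · rw [show ((⟨0, by norm_num⟩ : Fin 2)) = (0 : Fin 2) from rfl]
        rw [ha₀, hcong (Sum.inr 0)]
        rfl
      · rw [show ((⟨1, by norm_num⟩ : Fin 2)) = (1 : Fin 2) from rfl]
        rw [hb₀, hcong (Sum.inr 1)]
        rfl
    rw [harg2]
    refine mul_le_mul ?_ le_rfl (abs_nonneg _) hcB0
    refine le_comass B _ (fun i => ?_)
    exact hw _
  -- sum over permutations of the pair values
  have hsum1 : ∑ σ : Perm (Fin (2 * n') ⊕ Fin 2),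
        F (fse.permCongr σ a₀) (fse.permCongr σ b₀)
      = ∑ τ : Perm (Fin (2 * n' + 2)), F (τ a₀) (τ b₀) :=
    Equiv.sum_comp fse.permCongr (fun τ => F (τ a₀) (τ b₀))
  -- move the pair to positions 0, 1
  obtain ⟨ρ, hρ0, hρ1⟩ : ∃ ρ : Perm (Fin (2 * n' + 2)), ρ 0 = a₀ ∧ ρ 1 = b₀ := by
    set b₁ := Equiv.swap (0 : Fin (2 * n' + 2)) a₀ b₀ with hb₁
    refine ⟨Equiv.swap (0 : Fin (2 * n' + 2)) a₀ * Equiv.swap 1 b₁, ?_, ?_⟩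
    · rw [Perm.mul_apply]
      have h01 : (0 : Fin (2 * n' + 2)) ≠ 1 := by
        simp [Fin.ext_iff]
      have h0b : (0 : Fin (2 * n' + 2)) ≠ b₁ := by
        rw [hb₁]
        intro h
        have h2 := congrArg (Equiv.swap (0 : Fin (2 * n' + 2)) a₀) h
        rw [Equiv.swap_apply_self, Equiv.swap_apply_left] at h2
        exact hab h2
      rw [Equiv.swap_apply_of_ne_of_ne h01 h0b, Equiv.swap_apply_left]
    · rw [Perm.mul_apply, Equiv.swap_apply_left, hb₁, Equiv.swap_apply_self]
  have hsum2 : ∑ τ : Perm (Fin (2 * n' + 2)), F (τ a₀) (τ b₀)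
      = ∑ τ : Perm (Fin (2 * n' + 2)), F (τ 0) (τ 1) := by
    have h := Equiv.sum_comp (Equiv.mulRight ρ)
      (fun τ : Perm (Fin (2 * n' + 2)) => F (τ 0) (τ 1))
    rw [← h]
    refine Finset.sum_congr rfl fun τ _ => ?_
    simp only [Equiv.coe_mulRight]
    rw [Perm.mul_apply, Perm.mul_apply, hρ0, hρ1]
  -- the partner structure of F
  have hFle : ∀ p q, F p q ≤ cA := by
    intro p q
    refine le_comass a _ (fun i => ?_)
    fin_cases i
    · simpa using hw p
    · simpa using hw q
  have hF3 : ∀ p : Fin (2 * n' + 2), ∃ t : Fin (2 * n' + 2),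
      ∀ q : Fin (2 * n' + 2), q ≠ t → F p q = 0 := by
    intro p
    have hplt : (p : ℕ) < 2 * n' + 2 := p.isLt
    refine ⟨⟨if (p : ℕ) % 2 = 0 then (p : ℕ) + 1 else (p : ℕ) - 1, by
      by_cases h : (p : ℕ) % 2 = 0
      · rw [if_pos h]; omega
      · rw [if_neg h]; omega⟩, ?_⟩
    intro q hqt
    by_cases hqp : q = p
    · subst hqp
      have : a ![w q, w q] = 0 := by
        refine AlternatingMap.map_eq_zero_of_eq a _ (i := 0) (j := 1) ?_ (by decide)
        simp
      simp only [hF]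
      rw [this, abs_zero]
    · have hqv : (q : ℕ) ≠ (p : ℕ) := fun h => hqp (Fin.ext h)
      have htv : (q : ℕ) ≠ (if (p : ℕ) % 2 = 0 then (p : ℕ) + 1 else (p : ℕ) - 1) := by
        intro h
        exact hqt (Fin.ext (by rw [h]))
      have hqlt : (q : ℕ) < 2 * n' + 2 := q.isLt
      have hne : (p : ℕ) / 2 ≠ (q : ℕ) / 2 := by
        by_cases h : (p : ℕ) % 2 = 0
        · rw [if_pos h] at htv; omega
        · rw [if_neg h] at htv; omega
      simp only [hF]
      rw [hcan p q hne, abs_zero]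
  have hcount := perm_sum_le F cA hcA0 hFle hF3
  have hcast : ((2 * n' : ℕ) + 2 : ℝ) = (2 * n' + 2 : ℝ) := by norm_cast
  rw [hcast] at hcount
  -- put everything together
  have hval : ((2 * n').factorial * 2 : ℝ) * wedge B a w
      = ∑ σ : Perm (Fin (2 * n') ⊕ Fin 2), ((Equiv.Perm.sign σ : ℤ) : ℝ) *
          (B (fun i => u (σ (Sum.inl i))) * a (fun i => u (σ (Sum.inr i)))) := by
    rw [h2, hw0, nsmul_eq_mul]
    push_cast
    ring
  have habs : ((2 * n').factorial * 2 : ℝ) * |wedge B a w|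
      ≤ cB * ((2 * n' + 2 : ℝ) * (2 * n').factorial * cA) := by
    have h0 : (0 : ℝ) ≤ ((2 * n').factorial * 2 : ℝ) := by positivity
    calc ((2 * n').factorial * 2 : ℝ) * |wedge B a w|
        = |((2 * n').factorial * 2 : ℝ) * wedge B a w| := by
          rw [abs_mul, abs_of_nonneg h0]
      _ = |∑ σ : Perm (Fin (2 * n') ⊕ Fin 2), ((Equiv.Perm.sign σ : ℤ) : ℝ) *
            (B (fun i => u (σ (Sum.inl i))) * a (fun i => u (σ (Sum.inr i))))| := by
          rw [hval]
      _ ≤ ∑ σ : Perm (Fin (2 * n') ⊕ Fin 2), |((Equiv.Perm.sign σ : ℤ) : ℝ) *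
            (B (fun i => u (σ (Sum.inl i))) * a (fun i => u (σ (Sum.inr i))))| :=
          Finset.abs_sum_le_sum_abs _ _
      _ = ∑ σ : Perm (Fin (2 * n') ⊕ Fin 2),
            |B (fun i => u (σ (Sum.inl i))) * a (fun i => u (σ (Sum.inr i)))| := by
          refine Finset.sum_congr rfl fun σ _ => ?_
          rw [abs_mul]
          rcases Int.units_eq_one_or (Equiv.Perm.sign σ) with h | h <;> rw [h] <;> simp
      _ ≤ ∑ σ : Perm (Fin (2 * n') ⊕ Fin 2),
            cB * F (fse.permCongr σ a₀) (fse.permCongr σ b₀) :=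
          Finset.sum_le_sum fun σ _ => hterm σ
      _ = cB * ∑ σ : Perm (Fin (2 * n') ⊕ Fin 2),
            F (fse.permCongr σ a₀) (fse.permCongr σ b₀) := by rw [Finset.mul_sum]
      _ = cB * ∑ τ : Perm (Fin (2 * n' + 2)), F (τ 0) (τ 1) := by rw [hsum1, hsum2]
      _ ≤ cB * ((2 * n' + 2 : ℝ) * (2 * n').factorial * cA) :=
          mul_le_mul_of_nonneg_left hcount hcB0
  have hpos : (0 : ℝ) < ((2 * n').factorial * 2 : ℝ) := by positivity
  have hfinal : cB * ((2 * n' + 2 : ℝ) * (2 * n').factorial * cA)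
      = ((2 * n').factorial * 2 : ℝ) * ((n' + 1 : ℝ) * cB * cA) := by
    push_cast
    ring
  rw [hfinal] at habs
  exact le_of_mul_le_mul_left habs hpos

end WedgeBound

/-! ### Final assembly -/

section Final

variable {m : ℕ}

local notation "E" => EuclideanSpace ℝ (Fin m)

lemma two_form_expand {N : ℕ} (a : E [⋀^Fin 2]→ₗ[ℝ] ℝ) (v : Fin N → E) (c d : Fin N → ℝ) :
    a ![∑ k, c k • v k, ∑ l, d l • v l]
      = ∑ k, ∑ l, c k * d l * a ![v k, v l] := by
  classical
  have h1 : (![∑ k, c k • v k, ∑ l, d l • v l] : Fin 2 → E)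
      = fun i => ∑ j : Fin N, (![c, d] i j) • v j := by
    funext i
    fin_cases i <;> rfl
  rw [h1]
  rw [show a (fun i => ∑ j : Fin N, (![c, d] i j) • v j)
      = a.toMultilinearMap (fun i => ∑ j ∈ (Finset.univ : Finset (Fin N)),
          (fun (i : Fin 2) (j : Fin N) => (![c, d] i j) • v j) i j) from rfl]
  rw [MultilinearMap.map_sum_finset]
  have h2 : ∀ r : Fin 2 → Fin N,
      a.toMultilinearMap (fun i => (![c, d] i (r i)) • v (r i))
        = c (r 0) * d (r 1) * a ![v (r 0), v (r 1)] := by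
    intro r
    rw [a.toMultilinearMap.map_smul_univ (fun i => ![c, d] i (r i)) (fun i => v (r i))]
    rw [Fin.prod_univ_two]
    have : (fun i => v (r i)) = ![v (r 0), v (r 1)] := by
      funext i; fin_cases i <;> rfl
    rw [show (![c, d] 0 (r 0)) = c (r 0) from rfl, show (![c, d] 1 (r 1)) = d (r 1) from rfl]
    rw [smul_eq_mul]
    show c (r 0) * d (r 1) * a.toMultilinearMap (fun i => v (r i)) = _
    rw [show a.toMultilinearMap (fun i => v (r i)) = a (fun i => v (r i)) from rfl, this]
  rw [Fintype.piFinset_univ]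
  rw [Finset.sum_congr rfl (fun r _ => h2 r)]
  rw [← Equiv.sum_comp (piFinTwoEquiv (fun _ : Fin 2 => Fin N)).symm
    (fun r : Fin 2 → Fin N => c (r 0) * d (r 1) * a ![v (r 0), v (r 1)])]
  rw [Fintype.sum_prod_type]
  refine Finset.sum_congr rfl fun k _ => Finset.sum_congr rfl fun l _ => ?_
  have hr0 : (piFinTwoEquiv (fun _ : Fin 2 => Fin N)).symm (k, l) 0 = k := rfl
  have hr1 : (piFinTwoEquiv (fun _ : Fin 2 => Fin N)).symm (k, l) 1 = l := rfl
  rw [hr0, hr1]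

lemma wedge_orthonormal_bound (n' : ℕ) (B : E [⋀^Fin (2 * n')]→ₗ[ℝ] ℝ)
    (a : E [⋀^Fin 2]→ₗ[ℝ] ℝ) (v : Fin (2 * n' + 2) → E) (hv : Orthonormal ℝ v) :
    |wedge B a v| ≤ (n' + 1 : ℝ) * comass B * comass a := by
  classical
  set A : Fin (2 * n' + 2) → Fin (2 * n' + 2) → ℝ := fun k l => a ![v k, v l] with hA
  have hAskew : ∀ k l, A l k = -A k l := by
    intro k l
    have h := a.map_swap ![v k, v l] (i := 0) (j := 1) (by decide)
    have harg : (![v k, v l] ∘ Equiv.swap (0 : Fin 2) 1) = ![v l, v k] := by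
      funext i
      fin_cases i
      · simp [Equiv.swap_apply_left]
      · simp [Equiv.swap_apply_right]
    rw [harg] at h
    exact h
  set Lmat : EuclideanSpace ℝ (Fin (2 * n' + 2)) →ₗ[ℝ] EuclideanSpace ℝ (Fin (2 * n' + 2)) :=
    { toFun := fun c => WithLp.toLp 2 (fun k => ∑ l, A k l * c l : Fin (2 * n' + 2) → ℝ)
      map_add' := by
        intro x y
        ext k
        show ∑ l, A k l * (x + y) l = (∑ l, A k l * x l) + ∑ l, A k l * y l
        rw [← Finset.sum_add_distrib]
        refine Finset.sum_congr rfl fun l _ => ?_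
        have : (x + y) l = x l + y l := rfl
        rw [this, mul_add]
      map_smul' := by
        intro r x
        ext k
        show ∑ l, A k l * (r • x) l = r * ∑ l, A k l * x l
        rw [Finset.mul_sum]
        refine Finset.sum_congr rfl fun l _ => ?_
        have : (r • x) l = r * x l := rfl
        rw [this]; ring } with hLmat
  have hLapp : ∀ (c : EuclideanSpace ℝ (Fin (2 * n' + 2))) (k : Fin (2 * n' + 2)),
      Lmat c k = ∑ l, A k l * c l := fun c k => rfl
  have hskew : ∀ x y : EuclideanSpace ℝ (Fin (2 * n' + 2)), ⟪Lmat x, y⟫ = -⟪x, Lmat y⟫ := by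
    intro x y
    rw [real_inner_euclid, real_inner_euclid]
    have h1 : ∑ k, Lmat x k * y k = ∑ k, ∑ l, A k l * x l * y k := by
      refine Finset.sum_congr rfl fun k _ => ?_
      rw [hLapp, Finset.sum_mul]
    have h2 : ∑ k, x k * Lmat y k = ∑ k, ∑ l, A k l * x k * y l := by
      refine Finset.sum_congr rfl fun k _ => ?_
      rw [hLapp, Finset.mul_sum]
      exact Finset.sum_congr rfl fun l _ => by ring
    rw [h1, h2, ← Finset.sum_neg_distrib]
    rw [Finset.sum_comm]
    refine Finset.sum_congr rfl fun l _ => ?_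
    rw [← Finset.sum_neg_distrib]
    refine Finset.sum_congr rfl fun k _ => ?_
    rw [show A k l * x l * y k = -(A l k) * x l * y k from by rw [hAskew k l]; ring]
    ring
  obtain ⟨y, hyon, hy2⟩ := skew_canonical (2 * n' + 2) (EuclideanSpace ℝ (Fin (2 * n' + 2)))
    finrank_euclideanSpace_fin Lmat hskew
  set w : Fin (2 * n' + 2) → E := fun j => lincomb v (y j) with hwdef
  have hwon : Orthonormal ℝ w := lincomb_orthonormal hv hyon
  rw [← abs_rotate (wedge B a) v hyon]
  refine wedge_canonical_bound n' B a w (fun j => le_of_eq (hwon.1 j)) ?_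
  intro p q hpq
  have hwp : w p = ∑ k, y p k • v k := rfl
  have hwq : w q = ∑ l, y q l • v l := rfl
  rw [hwp, hwq, two_form_expand a v (y p) (y q)]
  have hinner : ⟪Lmat (y q), y p⟫ = ∑ k, ∑ l, y p k * y q l * A k l := by
    rw [real_inner_euclid]
    refine Finset.sum_congr rfl fun k _ => ?_
    rw [hLapp, Finset.sum_mul]
    exact Finset.sum_congr rfl fun l _ => by ring
  have hz : ⟪Lmat (y q), y p⟫ = 0 := hy2 q p (fun h => hpq h.symm)
  rw [hinner] at hz
  rw [← hz]

lemma abs_le_of_orthonormal_bound {k : ℕ} (ω : E [⋀^Fin (k + 1)]→ₗ[ℝ] ℝ) {C : ℝ} (hC : 0 ≤ C)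
    (h : ∀ e : Fin (k + 1) → E, Orthonormal ℝ e → |ω e| ≤ C)
    (v : Fin (k + 1) → E) (hv : ∀ i, ‖v i‖ ≤ 1) : |ω v| ≤ C := by
  classical
  letI : WellFoundedLT (Fin (k + 1)) := inferInstance
  by_cases hli : LinearIndependent ℝ v
  · set e : Fin (k + 1) → EuclideanSpace ℝ (Fin m) := InnerProductSpace.gramSchmidtNormed ℝ v with he
    have heo : Orthonormal ℝ e := InnerProductSpace.gramSchmidtNormed_orthonormal hli
    have hsp : ∀ i, v i ∈ Submodule.span ℝ (e '' Set.Iic i) := by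
      intro i
      rw [he, InnerProductSpace.span_gramSchmidtNormed, InnerProductSpace.span_gramSchmidt_Iic]
      exact Submodule.subset_span ⟨i, Set.mem_Iic.mpr le_rfl, rfl⟩
    rw [triangular_eval ω e v heo hsp, abs_mul]
    have h1 : |∏ i, ⟪e i, v i⟫| ≤ 1 := by
      rw [Finset.abs_prod]
      refine Finset.prod_le_one (fun i _ => abs_nonneg _) (fun i _ => ?_)
      calc |⟪e i, v i⟫| ≤ ‖e i‖ * ‖v i‖ := abs_real_inner_le_norm _ _
        _ ≤ 1 := by rw [heo.1 i, one_mul]; exact hv i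
    calc |∏ i, ⟪e i, v i⟫| * |ω e| ≤ 1 * |ω e| :=
          mul_le_mul_of_nonneg_right h1 (abs_nonneg _)
      _ = |ω e| := one_mul _
      _ ≤ C := h e heo
  · rw [AlternatingMap.map_linearDependent ω v hli]
    simpa using hC

end Final


/-- For any n 2-forms ω₁,…,ω_n on ℝ^m,
comass(ω₁ ∧ ⋯ ∧ ω_n) ≤ n! · comass(ω₁) ⋯ comass(ω_n). -/
theorem comass_wedge_many (m n : ℕ)
    (ω : Fin n → ((EuclideanSpace ℝ (Fin m)) [⋀^Fin 2]→ₗ[ℝ] ℝ)) :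
    comass (wedgeMany n ω) ≤ (n.factorial : ℝ) * ∏ i : Fin n, comass (ω i) := by
  induction n with
  | zero =>
    have h1 : comass (wedgeMany 0 ω) ≤ 1 := by
      refine comass_le _ (by norm_num) ?_
      intro v hv
      have : wedgeMany 0 ω v = 1 := rfl
      rw [this, abs_one]
    simpa using h1
  | succ n IH =>
    have hB := IH (fun i => ω i.castSucc)
    set B := wedgeMany n (fun i => ω i.castSucc) with hBdef
    set a := ω (Fin.last n) with hadef
    have hC0 : (0:ℝ) ≤ ((n + 1).factorial : ℝ) * ∏ i : Fin (n + 1), comass (ω i) := by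
      refine mul_nonneg (by positivity) (Finset.prod_nonneg fun i _ => comass_nonneg _)
    have hprod : ∏ i : Fin (n + 1), comass (ω i)
        = (∏ i : Fin n, comass (ω i.castSucc)) * comass a := by
      rw [Fin.prod_univ_castSucc]
    have hBnn : (0:ℝ) ≤ ∏ i : Fin n, comass (ω i.castSucc) :=
      Finset.prod_nonneg fun i _ => comass_nonneg _
    refine comass_le (wedgeMany (n + 1) ω) hC0 ?_
    have hkey : ∀ e : Fin (2 * n + 2) → EuclideanSpace ℝ (Fin m), Orthonormal ℝ e →
        |wedge B a e| ≤ ((n + 1).factorial : ℝ) * ∏ i : Fin (n + 1), comass (ω i) := by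
      intro e he
      calc |wedge B a e| ≤ (n + 1 : ℝ) * comass B * comass a :=
            wedge_orthonormal_bound n B a e he
        _ ≤ (n + 1 : ℝ) * ((n.factorial : ℝ) * ∏ i : Fin n, comass (ω i.castSucc)) * comass a := by
            refine mul_le_mul_of_nonneg_right ?_ (comass_nonneg a)
            exact mul_le_mul_of_nonneg_left hB (by positivity)
        _ = ((n + 1).factorial : ℝ) * ∏ i : Fin (n + 1), comass (ω i) := by
            rw [hprod, Nat.factorial_succ]
            push_cast
            ring
    intro v hv
    exact abs_le_of_orthonormal_bound (k := 2 * n + 1) (wedgeMany (n + 1) ω) hC0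
      (fun e he => hkey e he) v hv
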